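/- For a single user (K=1), the function ζ ↦ α(ζ) = (P_d P_t T_t/(1 + ζ P_w T/T_t)) / (1 + P_t T_t/(1 + ζ P_w T/T_t)) is convex on [0, ∞). -/

import Mathlib

open Set

private lemma convexOn_congr' {s : Set ℝ} {f g : ℝ → ℝ} (h : ConvexOn ℝ s f)
    (he : ∀ x ∈ s, g x = f x) : ConvexOn ℝ s g :=
  ⟨h.1, fun x hx y hy a b ha hb hab => by
    rw [he _ hx, he _ hy, he _ (h.1 hx hy ha hb hab)]
    exact h.2 hx hy ha hb hab⟩

/-- Convexity of the single-user `α` function on `[0, ∞)`. -/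
theorem alpha_convexOn (Pd Pt Tt Pw T : ℝ)
    (hPd : 0 < Pd) (hPt : 0 < Pt) (hTt : 0 < Tt) (hPw : 0 < Pw) (hT : 0 < T) :
    ConvexOn ℝ (Ici 0) (fun ζ : ℝ =>
      (Pd * Pt * Tt / (1 + ζ * Pw * T / Tt))
        / (1 + Pt * Tt / (1 + ζ * Pw * T / Tt))) := by
  set c : ℝ := Pw * T / Tt with hcdef
  have hc : 0 < c := by positivity
  set d : ℝ := 1 + Pt * Tt with hddef
  have hd : 0 < d := by positivity
  -- the affine map ζ ↦ c * ζ + d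
  let g : ℝ →ᵃ[ℝ] ℝ :=
    { toFun := fun ζ => c * ζ + d
      linear := c • LinearMap.id
      map_vadd' := by intro p v; simp [vadd_eq_add]; ring }
  have hinv : ConvexOn ℝ (Ioi (0:ℝ)) (fun x : ℝ => x⁻¹) := by
    simpa [zpow_neg] using convexOn_zpow (𝕜 := ℝ) (-1)
  have hcomp : ConvexOn ℝ (g ⁻¹' Ioi 0) ((fun x : ℝ => x⁻¹) ∘ g) :=
    hinv.comp_affineMap g
  have hsub : (Ici (0:ℝ)) ⊆ g ⁻¹' Ioi 0 := by
    intro x hx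
    simp only [mem_preimage, mem_Ioi]
    show (0:ℝ) < c * x + d
    have : 0 ≤ c * x := mul_nonneg hc.le hx
    linarith
  have hkey : ConvexOn ℝ (Ici 0) (fun ζ : ℝ => Pd * Pt * Tt * (c * ζ + d)⁻¹) := by
    have := ((hcomp.subset hsub (convex_Ici 0)).smul
      (by positivity : (0:ℝ) ≤ Pd * Pt * Tt))
    exact this
  refine convexOn_congr' hkey ?_
  intro x hx
  have hx0 : (0:ℝ) ≤ x := hx
  have hu : 0 < 1 + x * Pw * T / Tt := by positivity
  have hcd : 0 < c * x + d := by nlinarith [mul_nonneg hc.le hx0]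
  have huB : 0 < 1 + Pt * Tt / (1 + x * Pw * T / Tt) := by positivity
  rw [hcdef, hddef]
  field_simp
  ring
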